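/- Let x0 be a Pareto critical point of f: R^n -> R^k. Then there exists I subset {1,...,k} with |I| = rank(Df(x0)) + 1 such that rank(Df^I(x0)) = rank(Df(x0)) and x0 is Pareto critical for the subproblem with objectives indexed by I. -/

import Mathlib

open Module Submodule

section AuxLemmas

variable {k : ℕ} {E : Type*} [AddCommGroup E] [Module ℝ E] [FiniteDimensional ℝ E]

/-- Carathéodory-type shrinking: a convex combination of the `g i` equal to `0` can be
supported on a set `J'` with `J'.card = finrank (span (g '' J')) + 1`. -/
lemma caratheodory_shrink (g : Fin k → E) (J : Finset (Fin k)) :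
    ∀ β : Fin k → ℝ, (∀ i, 0 ≤ β i) → (∀ i ∉ J, β i = 0) →
      ∑ i, β i = 1 → ∑ i, β i • g i = 0 →
      ∃ J' : Finset (Fin k), J' ⊆ J ∧ ∃ β' : Fin k → ℝ, (∀ i, 0 ≤ β' i) ∧
        (∀ i ∉ J', β' i = 0) ∧ (∑ i, β' i = 1) ∧ (∑ i, β' i • g i = 0) ∧
        J'.card = finrank ℝ (span ℝ (g '' (J' : Set (Fin k)))) + 1 := by
  classical
  induction J using Finset.strongInductionOn with
  | _ J IH =>
  intro β hβ0 hβsupp hβsum hβcomb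
  have hsumJ : ∑ i ∈ J, β i = 1 := by
    rw [Finset.sum_subset (Finset.subset_univ J) (fun i _ hi => hβsupp i hi)]
    exact hβsum
  have hcombJ : ∑ i ∈ J, β i • g i = 0 := by
    rw [Finset.sum_subset (Finset.subset_univ J)
      (fun i _ hi => by rw [hβsupp i hi, zero_smul])]
    exact hβcomb
  by_cases hpos : ∀ i ∈ J, 0 < β i
  swap
  · push_neg at hpos
    obtain ⟨i0, hi0J, hi0⟩ := hpos
    have h0 : β i0 = 0 := le_antisymm hi0 (hβ0 i0)
    obtain ⟨J', hJ', rest⟩ := IH (J.erase i0) (Finset.erase_ssubset hi0J) β hβ0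
      (by
        intro i hi
        by_cases hiJ : i ∈ J
        · have : i = i0 := by
            by_contra hne
            exact hi (Finset.mem_erase.mpr ⟨hne, hiJ⟩)
          rw [this]; exact h0
        · exact hβsupp i hiJ) hβsum hβcomb
    exact ⟨J', hJ'.trans (Finset.erase_subset _ _), rest⟩
  -- now all weights on J are positive
  have hJne : J.Nonempty := by
    rcases J.eq_empty_or_nonempty with h | h
    · rw [h] at hsumJ; simp at hsumJ
    · exact h
  set d := finrank ℝ (span ℝ (g '' (J : Set (Fin k)))) with hd
  have hrange : Set.range (fun i : {x // x ∈ J} => g ↑i) = g '' (J : Set (Fin k)) :=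
    (Set.image_eq_range g (J : Set (Fin k))).symm
  have hdle : d ≤ J.card := by
    have himg : g '' (J : Set (Fin k)) = ((J.image g : Finset E) : Set E) := by
      rw [Finset.coe_image]
    calc d ≤ (J.image g).card := by
          rw [hd, himg]
          exact finrank_span_finset_le_card (J.image g)
      _ ≤ J.card := Finset.card_image_le
  have hdep : ¬ LinearIndependent ℝ (fun i : {x // x ∈ J} => g ↑i) := by
    intro hind
    obtain ⟨i0, hi0⟩ := hJne
    have hz := Fintype.linearIndependent_iff.mp hind (fun i => β ↑i) ?_ ⟨i0, hi0⟩
    · exact (hpos i0 hi0).ne' hz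
    · rw [← hcombJ, ← Finset.sum_coe_sort J (fun i => β i • g i)]
  rcases lt_trichotomy J.card (d + 1) with hlt | heq | hgt
  · exfalso
    apply hdep
    apply linearIndependent_iff_card_eq_finrank_span.mpr
    rw [Fintype.card_coe]
    show J.card = Set.finrank ℝ (Set.range fun i : {x // x ∈ J} => g ↑i)
    rw [Set.finrank, hrange, ← hd]
    omega
  · exact ⟨J, Finset.Subset.refl J, β, hβ0, hβsupp, hβsum, hβcomb, heq⟩
  · -- exchange step
    obtain ⟨i₁, hi₁⟩ := hJne
    set J₁ := J.erase i₁ with hJ₁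
    have hcard₁ : J₁.card = J.card - 1 := Finset.card_erase_of_mem hi₁
    have hdep₁ : ¬ LinearIndependent ℝ (fun i : {x // x ∈ J₁} => g ↑i - g i₁) := by
      intro hind
      have hc := linearIndependent_iff_card_eq_finrank_span.mp hind
      rw [Fintype.card_coe] at hc
      have hsub : span ℝ (Set.range (fun i : {x // x ∈ J₁} => g ↑i - g i₁)) ≤
          span ℝ (g '' (J : Set (Fin k))) := by
        rw [span_le]
        rintro _ ⟨i, rfl⟩
        exact sub_mem (subset_span ⟨↑i, Finset.mem_of_mem_erase i.2, rfl⟩)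
          (subset_span ⟨i₁, hi₁, rfl⟩)
      have hle : J₁.card ≤ d := by
        rw [hc]
        exact Submodule.finrank_mono hsub
      omega
    obtain ⟨γ₀, hγ₀sum, i₂, hγ₀ne⟩ := Fintype.not_linearIndependent_iff.mp hdep₁
    set c := ∑ i, γ₀ i with hc
    set γ : Fin k → ℝ :=
      fun i => if h : i ∈ J₁ then γ₀ ⟨i, h⟩ else if i = i₁ then -c else 0 with hγ
    have hγJ₁ : ∀ (i : {x // x ∈ J₁}), γ ↑i = γ₀ i := by
      rintro ⟨i, hi⟩
      simp only [hγ, dif_pos hi]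
    have hγi₁ : γ i₁ = -c := by
      simp only [hγ, dif_neg (Finset.notMem_erase i₁ J)]
      simp [hJ₁]
    have hγoff : ∀ i ∉ J, γ i = 0 := by
      intro i hi
      have h1 : i ∉ J₁ := fun h => hi (Finset.mem_of_mem_erase h)
      have h2 : i ≠ i₁ := fun h => hi (h ▸ hi₁)
      simp only [hγ, dif_neg h1, if_neg h2]
    have hsumJ₁ : ∑ i ∈ J₁, γ i = c := by
      rw [← Finset.sum_coe_sort J₁ γ]
      rw [hc]
      exact Finset.sum_congr rfl (fun i _ => hγJ₁ i)
    have hγsum : ∑ i ∈ J, γ i = 0 := by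
      rw [← Finset.add_sum_erase J γ hi₁, ← hJ₁, hsumJ₁, hγi₁]
      ring
    have hcombJ₁ : ∑ i ∈ J₁, γ i • g i = c • g i₁ := by
      rw [← Finset.sum_coe_sort J₁ (fun i => γ i • g i)]
      have : ∀ (i : {x // x ∈ J₁}), γ ↑i • g ↑i = γ₀ i • g ↑i :=
        fun i => by rw [hγJ₁ i]
      rw [Finset.sum_congr rfl (fun i _ => this i)]
      have hexp : ∑ i : {x // x ∈ J₁}, γ₀ i • (g ↑i - g i₁)
          = (∑ i : {x // x ∈ J₁}, γ₀ i • g ↑i) - c • g i₁ := by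
        rw [hc, Finset.sum_smul]
        rw [← Finset.sum_sub_distrib]
        exact Finset.sum_congr rfl (fun i _ => smul_sub _ _ _)
      rw [hexp] at hγ₀sum
      have := sub_eq_zero.mp hγ₀sum
      exact this
    have hγcomb : ∑ i ∈ J, γ i • g i = 0 := by
      rw [← Finset.add_sum_erase J (fun i => γ i • g i) hi₁, ← hJ₁, hcombJ₁, hγi₁]
      rw [neg_smul, neg_add_cancel]
    have hγposex : ∃ i ∈ J, 0 < γ i := by
      by_contra h
      push_neg at h
      have hi₂J : ↑i₂ ∈ J := Finset.mem_of_mem_erase i₂.2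
      have hne : γ ↑i₂ ≠ 0 := by rw [hγJ₁ i₂]; exact hγ₀ne
      have hlt : γ ↑i₂ < 0 := lt_of_le_of_ne (h _ hi₂J) hne
      have : ∑ i ∈ J, γ i < ∑ i ∈ J, (0 : ℝ) :=
        Finset.sum_lt_sum h ⟨↑i₂, hi₂J, hlt⟩
      rw [hγsum, Finset.sum_const_zero] at this
      exact lt_irrefl _ this
    set T := J.filter (fun i => 0 < γ i) with hT
    have hTne : T.Nonempty := by
      obtain ⟨i, hiJ, hipos⟩ := hγposex
      exact ⟨i, Finset.mem_filter.mpr ⟨hiJ, hipos⟩⟩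
    obtain ⟨i₀, hi₀T, hi₀min⟩ := Finset.exists_min_image T (fun i => β i / γ i) hTne
    have hi₀J : i₀ ∈ J := (Finset.mem_filter.mp hi₀T).1
    have hγi₀ : 0 < γ i₀ := (Finset.mem_filter.mp hi₀T).2
    set t := β i₀ / γ i₀ with ht
    have ht0 : 0 ≤ t := div_nonneg (hβ0 i₀) hγi₀.le
    set β' : Fin k → ℝ := fun i => if i ∈ J then β i - t * γ i else 0 with hβ'
    have hβ'J : ∀ i ∈ J, β' i = β i - t * γ i := fun i hi => by
      simp only [hβ', if_pos hi]
    have hβ'0 : ∀ i, 0 ≤ β' i := by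
      intro i
      by_cases hiJ : i ∈ J
      · rw [hβ'J i hiJ]
        rcases le_or_gt (γ i) 0 with hγi | hγi
        · nlinarith [hβ0 i]
        · have hiT : i ∈ T := Finset.mem_filter.mpr ⟨hiJ, hγi⟩
          have hmin := hi₀min i hiT
          have : t * γ i ≤ β i := (le_div_iff₀ hγi).mp hmin
          linarith
      · simp only [hβ', if_neg hiJ, le_refl]
    have hβ'i₀ : β' i₀ = 0 := by
      rw [hβ'J i₀ hi₀J, ht, div_mul_cancel₀ _ hγi₀.ne', sub_self]
    have hβ'supp : ∀ i ∉ J.erase i₀, β' i = 0 := by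
      intro i hi
      by_cases hiJ : i ∈ J
      · have : i = i₀ := by
          by_contra hne
          exact hi (Finset.mem_erase.mpr ⟨hne, hiJ⟩)
        rw [this]; exact hβ'i₀
      · simp only [hβ', if_neg hiJ]
    have hβ'off : ∀ i ∉ J, β' i = 0 := fun i hi => by simp only [hβ', if_neg hi]
    have hβ'sum : ∑ i, β' i = 1 := by
      rw [← Finset.sum_subset (Finset.subset_univ J) (fun i _ hi => hβ'off i hi)]
      calc ∑ i ∈ J, β' i = ∑ i ∈ J, (β i - t * γ i) :=
            Finset.sum_congr rfl (fun i hi => hβ'J i hi)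
        _ = (∑ i ∈ J, β i) - t * ∑ i ∈ J, γ i := by
            rw [Finset.sum_sub_distrib, Finset.mul_sum]
        _ = 1 := by rw [hsumJ, hγsum]; ring
    have hβ'comb : ∑ i, β' i • g i = 0 := by
      rw [← Finset.sum_subset (Finset.subset_univ J)
        (fun i _ hi => by rw [hβ'off i hi, zero_smul])]
      calc ∑ i ∈ J, β' i • g i = ∑ i ∈ J, (β i • g i - t • (γ i • g i)) := by
            refine Finset.sum_congr rfl (fun i hi => ?_)
            rw [hβ'J i hi, sub_smul, mul_smul]
        _ = (∑ i ∈ J, β i • g i) - t • ∑ i ∈ J, γ i • g i := by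
            rw [Finset.sum_sub_distrib, Finset.smul_sum]
        _ = 0 := by rw [hcombJ, hγcomb, smul_zero, sub_zero]
    obtain ⟨J', hJ'sub, rest⟩ := IH (J.erase i₀) (Finset.erase_ssubset hi₀J) β'
      hβ'0 hβ'supp hβ'sum hβ'comb
    exact ⟨J', hJ'sub.trans (Finset.erase_subset _ _), rest⟩

/-- Extension: enlarge `J` (keeping `card = finrank span + 1`) until the span of the
selected rows has full rank. -/
lemma extend_rank (g : Fin k → E) :
    ∀ (m : ℕ) (J : Finset (Fin k)),
      J.card = finrank ℝ (span ℝ (g '' (J : Set (Fin k)))) + 1 →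
      finrank ℝ (span ℝ (g '' (J : Set (Fin k)))) + m = finrank ℝ (span ℝ (Set.range g)) →
      ∃ I : Finset (Fin k), J ⊆ I ∧ I.card = finrank ℝ (span ℝ (Set.range g)) + 1 ∧
        finrank ℝ (span ℝ (g '' (I : Set (Fin k)))) = finrank ℝ (span ℝ (Set.range g)) := by
  intro m
  induction m with
  | zero =>
    intro J h1 h2
    exact ⟨J, Finset.Subset.refl J, by omega, by omega⟩
  | succ m IH =>
    intro J h1 h2
    obtain ⟨i, hi⟩ : ∃ i, g i ∉ span ℝ (g '' (J : Set (Fin k))) := by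
      by_contra h
      push_neg at h
      have hle : span ℝ (Set.range g) ≤ span ℝ (g '' (J : Set (Fin k))) :=
        span_le.mpr (Set.range_subset_iff.mpr h)
      have := Submodule.finrank_mono hle
      omega
    have hiJ : i ∉ J := fun hmem => hi (subset_span ⟨i, hmem, rfl⟩)
    have himg : g '' ((insert i J : Finset (Fin k)) : Set (Fin k))
        = insert (g i) (g '' (J : Set (Fin k))) := by
      rw [Finset.coe_insert, Set.image_insert_eq]
    have hne0 : g i ≠ 0 := fun h => hi (h ▸ zero_mem _)
    have hup : finrank ℝ (span ℝ (insert (g i) (g '' (J : Set (Fin k)))))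
        ≤ finrank ℝ (span ℝ (g '' (J : Set (Fin k)))) + 1 := by
      rw [Submodule.span_insert]
      have hsup := Submodule.finrank_sup_add_finrank_inf_eq
        (ℝ ∙ g i) (span ℝ (g '' (J : Set (Fin k))))
      have h1' := finrank_span_singleton (K := ℝ) hne0
      omega
    have hlo : finrank ℝ (span ℝ (g '' (J : Set (Fin k))))
        < finrank ℝ (span ℝ (insert (g i) (g '' (J : Set (Fin k))))) := by
      apply Submodule.finrank_lt_finrank_of_lt
      refine lt_of_le_of_ne (span_mono (Set.subset_insert _ _)) ?_
      intro h
      exact hi (h ▸ subset_span (Set.mem_insert _ _))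
    have hcard : (insert i J).card = J.card + 1 := Finset.card_insert_of_notMem hiJ
    have heq : finrank ℝ (span ℝ (g '' ((insert i J : Finset (Fin k)) : Set (Fin k))))
        = finrank ℝ (span ℝ (g '' (J : Set (Fin k)))) + 1 := by
      rw [himg]; omega
    obtain ⟨I, hs, h3, h4⟩ := IH (insert i J) (by omega) (by omega)
    exact ⟨I, (Finset.subset_insert i J).trans hs, h3, h4⟩

end AuxLemmas

noncomputable def Jac (n k : ℕ) (f : Fin k → (Fin n → ℝ) → ℝ) (x : Fin n → ℝ) :
    Matrix (Fin k) (Fin n) ℝ :=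
  Matrix.of fun i j => fderiv ℝ (f i) x (Pi.single j 1)

/-- The Jacobian of the subvector `f^I` at `x` (rows indexed by `I`). -/
noncomputable def JacSub (n k : ℕ) (f : Fin k → (Fin n → ℝ) → ℝ) (x : Fin n → ℝ)
    (I : Finset (Fin k)) : Matrix I (Fin n) ℝ :=
  Matrix.of fun i j => fderiv ℝ (f (i : Fin k)) x (Pi.single j 1)

def ParetoCriticalSub (n k : ℕ) (f : Fin k → (Fin n → ℝ) → ℝ) (I : Finset (Fin k)) :
    Set (Fin n → ℝ) :=
  {x | ∃ α : Fin k → ℝ, (∀ i, 0 ≤ α i) ∧ (∀ i ∉ I, α i = 0) ∧ ∑ i, α i = 1 ∧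
    (∑ i, α i • fderiv ℝ (f i) x) = 0}

/-- every Pareto critical point is Pareto critical for a subproblem with
`rank Df(x₀) + 1` objectives whose Jacobian has the same rank as `Df(x₀)`. -/
theorem exists_subproblem_same_rank (n k : ℕ)
    (f : Fin k → (Fin n → ℝ) → ℝ) (hf : ∀ i, ContDiff ℝ 1 (f i))
    (x₀ : Fin n → ℝ) (hcrit : x₀ ∈ ParetoCriticalSub n k f Finset.univ) :
    ∃ I : Finset (Fin k), I.card = (Jac n k f x₀).rank + 1 ∧
      (JacSub n k f x₀ I).rank = (Jac n k f x₀).rank ∧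
      x₀ ∈ ParetoCriticalSub n k f I := by
  classical
  obtain ⟨α, hα0, -, hαsum, hαcomb⟩ := hcrit
  set g : Fin k → (Fin n → ℝ) := fun i => Jac n k f x₀ i with hgdef
  have hgapp : ∀ i j, g i j = fderiv ℝ (f i) x₀ (Pi.single j 1) := fun i j => rfl
  -- key equivalence between the functional identity and the coordinate identity
  have key : ∀ β : Fin k → ℝ,
      (∑ i, β i • fderiv ℝ (f i) x₀) = 0 ↔ ∑ i, β i • g i = 0 := by
    intro β
    constructor
    · intro h
      funext j
      have hj := congrArg (fun (L : (Fin n → ℝ) →L[ℝ] ℝ) => L (Pi.single j 1)) h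
      simpa [ContinuousLinearMap.sum_apply, hgapp] using hj
    · intro h
      have hcoord : ∀ j, ∑ i, β i * g i j = 0 := by
        intro j
        have := congrFun h j
        simpa using this
      ext v
      have hv : ∀ i, fderiv ℝ (f i) x₀ v = ∑ j, v j * g i j := by
        intro i
        have hb : ∀ j : Fin n, (fun j' => if j = j' then (1 : ℝ) else 0) = Pi.single j 1 := by
          intro j
          funext j'
          simp [Pi.single_apply, eq_comm]
        have := LinearMap.pi_apply_eq_sum_univ
          ((fderiv ℝ (f i) x₀ : (Fin n → ℝ) →L[ℝ] ℝ) : (Fin n → ℝ) →ₗ[ℝ] ℝ) v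
        simp only [ContinuousLinearMap.coe_coe] at this
        rw [this]
        refine Finset.sum_congr rfl (fun j _ => ?_)
        rw [hb j, hgapp, smul_eq_mul]
      have hcalc : (∑ i, β i • fderiv ℝ (f i) x₀) v = ∑ j, v j * ∑ i, β i * g i j := by
        simp only [ContinuousLinearMap.sum_apply, ContinuousLinearMap.coe_smul',
          Pi.smul_apply, smul_eq_mul]
        simp_rw [hv, Finset.mul_sum]
        rw [Finset.sum_comm]
        refine Finset.sum_congr rfl (fun j _ => ?_)
        exact Finset.sum_congr rfl (fun i _ => by ring)
      rw [hcalc]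
      simp [hcoord]
  have hvec : ∑ i, α i • g i = 0 := (key α).mp hαcomb
  obtain ⟨J, -, β, hβ0, hβsupp, hβsum, hβcomb, hβcard⟩ :=
    caratheodory_shrink g Finset.univ α hα0 (by simp) hαsum hvec
  set r := finrank ℝ (span ℝ (Set.range g)) with hr
  have hd : finrank ℝ (span ℝ (g '' (J : Set (Fin k)))) ≤ r :=
    Submodule.finrank_mono (span_mono (Set.image_subset_range g _))
  obtain ⟨I, hJI, hIcard, hIrank⟩ :=
    extend_rank g (r - finrank ℝ (span ℝ (g '' (J : Set (Fin k))))) J hβcard (by omega)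
  have hrank : (Jac n k f x₀).rank = r := by
    rw [Matrix.rank_eq_finrank_span_row]
    rfl
  have hsubrange : Set.range (JacSub n k f x₀ I).row = g '' (I : Set (Fin k)) :=
    (Set.image_eq_range g (I : Set (Fin k))).symm
  refine ⟨I, ?_, ?_, ?_⟩
  · rw [hrank]; exact hIcard
  · rw [hrank, Matrix.rank_eq_finrank_span_row, hsubrange, hIrank]
  · exact ⟨β, hβ0, fun i hi => hβsupp i (fun h => hi (hJI h)), hβsum, (key β).mpr hβcomb⟩
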